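/- arXiv:math/0202202 — 2 statements merged into one kernel-verified Lean document; each statement's English description precedes it below -/
import Mathlib

section
/- Suppose g : ℝ × ℝ^{2N} → ℝ^{2N} is continuous and there is a real symmetric 2N×2N matrix C such that ⟨g(t,ξ), JCξ⟩ > 0 for all t ∈ ℝ and all ξ ∈ ℝ^{2N} \ {0}. Then the only solution x ∈ H¹(ℝ, ℝ^{2N}) ∩ C¹(ℝ, ℝ^{2N}) of Jx′(t) = g(t, x(t)) with x(t) → 0 as |t| → ∞ is x ≡ 0. -/
open MeasureTheory Filter Topology
open scoped RealInnerProductSpace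

/-- Theorem 5.3(a): If `g` is continuous and there is a real
symmetric matrix `C` with `⟨g(t,ξ), JCξ⟩ > 0` for all `t` and `ξ ≠ 0`, then the
only `H¹ ∩ C¹` solution of `Jx′(t) = g(t,x(t))` vanishing at infinity is `x ≡ 0`. -/
theorem stmt12 {N : ℕ}
    (J : EuclideanSpace ℝ (Fin (2 * N)) →L[ℝ] EuclideanSpace ℝ (Fin (2 * N)))
    (hJ2 : ∀ v, J (J v) = -v) (hJa : ∀ v w, ⟪J v, w⟫ = -⟪v, J w⟫)
    (g : ℝ → EuclideanSpace ℝ (Fin (2 * N)) → EuclideanSpace ℝ (Fin (2 * N)))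
    (hg : Continuous fun p : ℝ × EuclideanSpace ℝ (Fin (2 * N)) => g p.1 p.2)
    (C : EuclideanSpace ℝ (Fin (2 * N)) →L[ℝ] EuclideanSpace ℝ (Fin (2 * N)))
    (hCsymm : ∀ v w, ⟪C v, w⟫ = ⟪v, C w⟫)
    (hpos : ∀ (t : ℝ) (ξ : EuclideanSpace ℝ (Fin (2 * N))), ξ ≠ 0 →
      0 < ⟪g t ξ, J (C ξ)⟫)
    (x x' : ℝ → EuclideanSpace ℝ (Fin (2 * N)))
    (hx : ∀ t, HasDerivAt x (x' t) t) (hx'cont : Continuous x')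
    (hxL2 : MemLp x 2 (volume : Measure ℝ)) (hx'L2 : MemLp x' 2 (volume : Measure ℝ))
    (hode : ∀ t, J (x' t) = g t (x t))
    (hdecay : Tendsto x (cocompact ℝ) (nhds 0)) :
    ∀ t, x t = 0 := by
  have hx'eq : ∀ t, x' t = -(J (g t (x t))) := by
    intro t
    have h := congrArg J (hode t)
    rw [hJ2] at h
    rw [← h, neg_neg]
  set φ : ℝ → ℝ := fun t => ⟪C (x t), x t⟫ with hφdef
  have hd : ∀ t, HasDerivAt φ (2 * ⟪g t (x t), J (C (x t))⟫) t := by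
    intro t
    have h1 : HasDerivAt (fun s => C (x s)) (C (x' t)) t :=
      C.hasFDerivAt.comp_hasDerivAt t (hx t)
    have h2 := h1.inner ℝ (hx t)
    refine h2.congr_deriv ?_
    have e1 : ⟪C (x t), x' t⟫ = ⟪x' t, C (x t)⟫ := real_inner_comm _ _
    have e2 : ⟪C (x' t), x t⟫ = ⟪x' t, C (x t)⟫ := hCsymm _ _
    have e3 : ⟪x' t, C (x t)⟫ = ⟪g t (x t), J (C (x t))⟫ := by
      rw [hx'eq t, inner_neg_left, hJa]; ring
    rw [e1, e2, e3]; ring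
  have hnn : ∀ t, 0 ≤ 2 * ⟪g t (x t), J (C (x t))⟫ := by
    intro t
    by_cases h : x t = 0
    · simp [h]
    · linarith [hpos t (x t) h]
  have hmono : Monotone φ :=
    monotone_of_deriv_nonneg (fun t => (hd t).differentiableAt)
      (fun t => by rw [(hd t).deriv]; exact hnn t)
  have hφcocompact : Tendsto φ (cocompact ℝ) (𝓝 0) := by
    have hc : Continuous fun v : EuclideanSpace ℝ (Fin (2 * N)) => ⟪C v, v⟫ :=
      C.continuous.inner continuous_id
    have := (hc.tendsto 0).comp hdecay
    simpa [hφdef, Function.comp_def] using this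
  have hTop : Tendsto φ atTop (𝓝 0) :=
    hφcocompact.mono_left (by rw [cocompact_eq_atBot_atTop]; exact le_sup_right)
  have hBot : Tendsto φ atBot (𝓝 0) :=
    hφcocompact.mono_left (by rw [cocompact_eq_atBot_atTop]; exact le_sup_left)
  have hzero : ∀ t, φ t = 0 := fun t =>
    le_antisymm (hmono.ge_of_tendsto hTop t) (hmono.le_of_tendsto hBot t)
  intro t
  by_contra hne
  have hconst : HasDerivAt φ 0 t := by
    have : φ = fun _ => (0 : ℝ) := funext hzero
    rw [this]; exact hasDerivAt_const t 0
  have := (hd t).unique hconst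
  have hp := hpos t (x t) hne
  linarith
end

section
/- Let A : [a,b] → Φ₀(X,Y) be a C¹ path of Fredholm operators of index zero between Banach spaces, and let λ₀ ∈ (a,b) be such that A′(λ₀)[ker A(λ₀)] ⊕ range A(λ₀) = Y (topological direct sum). Then there exists ε > 0 with [λ₀−ε, λ₀+ε] ⊂ [a,b] such that A(λ) is an isomorphism from X onto Y for every λ ∈ [λ₀−ε, λ₀+ε] \ {λ₀}. -/
open Filter Topology

/-- Fredholm of index zero. -/
def IsFredholmIndexZero {X Y : Type*} [NormedAddCommGroup X] [NormedSpace ℝ X]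
    [NormedAddCommGroup Y] [NormedSpace ℝ Y] (L : X →L[ℝ] Y) : Prop :=
  IsClosed (LinearMap.range (L : X →ₗ[ℝ] Y) : Set Y) ∧
    FiniteDimensional ℝ (LinearMap.ker (L : X →ₗ[ℝ] Y)) ∧
    Module.finrank ℝ (LinearMap.ker (L : X →ₗ[ℝ] Y)) =
      Module.finrank ℝ (Y ⧸ LinearMap.range (L : X →ₗ[ℝ] Y))

set_option maxHeartbeats 1000000 in
/-- part of Proposition 2.1: Let `A : [a,b] → Φ₀(X,Y)` be a `C¹`
path of index-zero Fredholm operators and `λ₀ ∈ (a,b)` with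
`A′(λ₀)[ker A(λ₀)] ⊕ range A(λ₀) = Y`.  Then for some `ε > 0` with
`[λ₀−ε,λ₀+ε] ⊆ [a,b]`, `A(λ)` is an isomorphism for all `λ ≠ λ₀` in that interval. -/
theorem stmt16 {X Y : Type*} [NormedAddCommGroup X] [NormedSpace ℝ X] [CompleteSpace X]
    [NormedAddCommGroup Y] [NormedSpace ℝ Y] [CompleteSpace Y]
    (a b : ℝ) (hab : a < b)
    (A A' : ℝ → (X →L[ℝ] Y))
    (hA : ∀ lam ∈ Set.Icc a b, HasDerivAt A (A' lam) lam)
    (hA'cont : ContinuousOn A' (Set.Icc a b))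
    (hFred : ∀ lam ∈ Set.Icc a b, IsFredholmIndexZero (A lam))
    (lam0 : ℝ) (hlam0 : lam0 ∈ Set.Ioo a b)
    (htrans_sup : (LinearMap.ker ((A lam0 : X →L[ℝ] Y) : X →ₗ[ℝ] Y)).map
        ((A' lam0 : X →L[ℝ] Y) : X →ₗ[ℝ] Y) ⊔
        LinearMap.range ((A lam0 : X →L[ℝ] Y) : X →ₗ[ℝ] Y) = ⊤)
    (htrans_inf : (LinearMap.ker ((A lam0 : X →L[ℝ] Y) : X →ₗ[ℝ] Y)).map
        ((A' lam0 : X →L[ℝ] Y) : X →ₗ[ℝ] Y) ⊓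
        LinearMap.range ((A lam0 : X →L[ℝ] Y) : X →ₗ[ℝ] Y) = ⊥) :
    ∃ ε > 0, Set.Icc (lam0 - ε) (lam0 + ε) ⊆ Set.Icc a b ∧
      ∀ lam ∈ Set.Icc (lam0 - ε) (lam0 + ε), lam ≠ lam0 →
        Function.Bijective (A lam) := by
  classical
  obtain ⟨hlam0a, hlam0b⟩ := hlam0
  have hlam0m : lam0 ∈ Set.Icc a b := ⟨le_of_lt hlam0a, le_of_lt hlam0b⟩
  obtain ⟨hRclosed, hNfd, hrank⟩ := hFred lam0 hlam0m
  set T : X →L[ℝ] Y := A lam0 with hT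
  set D : X →L[ℝ] Y := A' lam0 with hD
  set N : Submodule ℝ X := LinearMap.ker (T : X →ₗ[ℝ] Y) with hN
  set Rg : Submodule ℝ Y := LinearMap.range (T : X →ₗ[ℝ] Y) with hRg
  set Z : Submodule ℝ Y := N.map (D : X →ₗ[ℝ] Y) with hZ
  haveI : FiniteDimensional ℝ N := hNfd
  haveI : FiniteDimensional ℝ Z := Module.Finite.map N (D : X →ₗ[ℝ] Y)
  have hZR : IsCompl Z Rg := ⟨disjoint_iff.mpr htrans_inf, codisjoint_iff.mpr htrans_sup⟩
  have hZc : IsClosed (Z : Set Y) := Z.closed_of_finiteDimensional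
  let QZ : Y →L[ℝ] Z := Z.linearProjOfClosedCompl Rg hZR hZc hRclosed
  let QR : Y →L[ℝ] Rg := Rg.linearProjOfClosedCompl Z hZR.symm hRclosed hZc
  have hQZ : ∀ y : Y, QZ y = Z.projectionOnto Rg hZR y := fun y =>
    congrFun (Submodule.coe_continuous_linearProjOfClosedCompl' hZR hZc hRclosed) y
  have hQR : ∀ y : Y, QR y = Rg.projectionOnto Z hZR.symm y := fun y =>
    congrFun (Submodule.coe_continuous_linearProjOfClosedCompl' hZR.symm hRclosed hZc) y
  have hQsum : ∀ y : Y, ((QZ y : Y) + (QR y : Y)) = y := by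
    intro y
    rw [hQZ, hQR]
    exact Submodule.projection_add_projection_eq_self hZR y
  obtain ⟨X0, hX0c, hNX0⟩ :=
    (Submodule.ClosedComplemented.of_finiteDimensional N).exists_isClosed_isCompl
  haveI : CompleteSpace X0 := hX0c.completeSpace_coe
  haveI : CompleteSpace Rg := hRclosed.completeSpace_coe
  let Tres : X0 →L[ℝ] Rg := (T.comp X0.subtypeL).codRestrict Rg (fun x => ⟨x.1, rfl⟩)
  have hTres_inj : Tres.ker = ⊥ := by
    rw [LinearMap.ker_eq_bot']
    intro x hx
    have hx' : (x : X) ∈ N := by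
      have h0 : T (x : X) = 0 := congrArg Subtype.val hx
      exact LinearMap.mem_ker.mpr h0
    have hmem : (x : X) ∈ N ⊓ X0 := ⟨hx', x.2⟩
    rw [hNX0.inf_eq_bot] at hmem
    exact Subtype.ext hmem
  have hTres_surj : Tres.range = ⊤ := by
    rw [LinearMap.range_eq_top]
    rintro ⟨y, x, rfl⟩
    refine ⟨X0.projectionOnto N hNX0.symm x, Subtype.ext ?_⟩
    have hdec : ((N.projectionOnto X0 hNX0 x : X)) + (X0.projectionOnto N hNX0.symm x : X) = x :=
      Submodule.projection_add_projection_eq_self hNX0 x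
    have hTn : T ((N.projectionOnto X0 hNX0 x : X)) = 0 :=
      LinearMap.mem_ker.mp (N.projectionOnto X0 hNX0 x).2
    show T ((X0.projectionOnto N hNX0.symm x : X)) = T x
    calc T ((X0.projectionOnto N hNX0.symm x : X))
        = T ((N.projectionOnto X0 hNX0 x : X)) +
          T ((X0.projectionOnto N hNX0.symm x : X)) := by rw [hTn, zero_add]
      _ = T x := by rw [← map_add, hdec]
  let A0 : X0 ≃L[ℝ] Rg := ContinuousLinearEquiv.ofBijective Tres hTres_inj hTres_surj
  let Dres : N →ₗ[ℝ] Z := ((D : X →ₗ[ℝ] Y).domRestrict N).codRestrict Z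
    (fun n => Submodule.mem_map_of_mem n.2)
  have hDres_surj : Function.Surjective Dres := by
    rintro ⟨z, hz⟩
    obtain ⟨n, hn, rfl⟩ := hz
    exact ⟨⟨n, hn⟩, rfl⟩
  have hfr : Module.finrank ℝ N = Module.finrank ℝ Z := by
    rw [hrank]
    exact (Submodule.quotientEquivOfIsCompl Rg Z hZR.symm).finrank_eq
  have hDres_inj : Function.Injective Dres :=
    (LinearMap.injective_iff_surjective_of_finrank_eq_finrank hfr).mpr hDres_surj
  let DN : N ≃ₗ[ℝ] Z := LinearEquiv.ofBijective Dres ⟨hDres_inj, hDres_surj⟩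
  let J : Z →L[ℝ] N := LinearMap.toContinuousLinearMap (DN.symm : Z →ₗ[ℝ] N)
  let G1 : Y →L[ℝ] X := N.subtypeL ∘L (J ∘L QZ)
  let G2 : Y →L[ℝ] X := X0.subtypeL ∘L ((A0.symm : Rg →L[ℝ] X0) ∘L QR)
  have hTG1 : ∀ y : Y, T (G1 y) = 0 := fun y => LinearMap.mem_ker.mp (J (QZ y)).2
  have hDG1 : ∀ y : Y, D (G1 y) = (QZ y : Y) := by
    intro y
    calc D (G1 y) = ((DN (DN.symm (QZ y)) : Z) : Y) := rfl
      _ = (QZ y : Y) := by rw [DN.apply_symm_apply]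
  have hTG2 : ∀ y : Y, T (G2 y) = (QR y : Y) := by
    intro y
    calc T (G2 y) = ((A0 (A0.symm (QR y)) : Rg) : Y) := rfl
      _ = (QR y : Y) := by rw [A0.apply_symm_apply]
  clear_value Tres A0 Dres DN J QZ QR G1 G2
  -- constants
  set C1 : ℝ := ‖G1‖ with hC1
  set C2 : ℝ := ‖G2‖ with hC2
  set C3 : ℝ := ‖D‖ * ‖G2‖ with hC3
  have hC1nn : 0 ≤ C1 := norm_nonneg _
  have hC2nn : 0 ≤ C2 := norm_nonneg _
  have hC3nn : 0 ≤ C3 := mul_nonneg (norm_nonneg _) (norm_nonneg _)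
  set δ : ℝ := 1 / (4 * (C1 + C2 + 1)) with hδdef
  have hδpos : 0 < δ := by positivity
  -- little-o from the derivative at lam0
  have hder : HasDerivAt A D lam0 := hA lam0 hlam0m
  have hlo : (fun lam => A lam - T - (lam - lam0) • D) =o[𝓝 lam0] fun lam => lam - lam0 :=
    hasDerivAt_iff_isLittleO.mp hder
  obtain ⟨ε₁, hε₁pos, hε₁⟩ := Metric.eventually_nhds_iff.mp (hlo.def hδpos)
  set ε : ℝ := min (ε₁ / 2) (min (min 1 (1 / (4 * (C3 + 1)))) (min (lam0 - a) (b - lam0)))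
    with hεdef
  have hεpos : 0 < ε :=
    lt_min (by positivity) (lt_min (lt_min one_pos (by positivity))
      (lt_min (by linarith) (by linarith)))
  have hε1 : ε ≤ 1 := le_trans (min_le_right _ _) (le_trans (min_le_left _ _) (min_le_left _ _))
  have hεC3 : ε ≤ 1 / (4 * (C3 + 1)) :=
    le_trans (min_le_right _ _) (le_trans (min_le_left _ _) (min_le_right _ _))
  have hεa : ε ≤ lam0 - a :=
    le_trans (min_le_right _ _) (le_trans (min_le_right _ _) (min_le_left _ _))
  have hεb : ε ≤ b - lam0 :=
    le_trans (min_le_right _ _) (le_trans (min_le_right _ _) (min_le_right _ _))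
  have hεε₁ : ε < ε₁ := lt_of_le_of_lt (min_le_left _ _) (by linarith)
  refine ⟨ε, hεpos, ?_, ?_⟩
  · intro x hx
    exact ⟨by linarith [hx.1], by linarith [hx.2]⟩
  intro lam hmem hne
  set μ : ℝ := lam - lam0 with hμdef
  have hμne : μ ≠ 0 := sub_ne_zero.mpr hne
  have hμabs : |μ| ≤ ε := abs_le.mpr ⟨by linarith [hmem.1], by linarith [hmem.2]⟩
  have hμpos : 0 < |μ| := abs_pos.mpr hμne
  set Rm : X →L[ℝ] Y := A lam - T - μ • D with hRmdef
  have hRmle : ‖Rm‖ ≤ δ * |μ| := by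
    have := hε₁ (y := lam) (by rw [Real.dist_eq]; exact lt_of_le_of_lt hμabs hεε₁)
    simpa [Rm, Real.norm_eq_abs] using this
  set S : Y →L[ℝ] X := μ⁻¹ • G1 + G2 with hSdef
  -- pointwise expansion of A lam ∘ S
  have hAx : ∀ x : X, A lam x = T x + μ • D x + Rm x := by
    intro x
    simp only [hRmdef, ContinuousLinearMap.sub_apply, ContinuousLinearMap.smul_apply]
    abel
  have key : ∀ y : Y, A lam (S y) - y = μ⁻¹ • Rm (G1 y) + (μ • D (G2 y) + Rm (G2 y)) := by
    intro y
    have h1 : A lam (S y) = μ⁻¹ • (A lam (G1 y)) + A lam (G2 y) := by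
      simp [hSdef, map_add, map_smul]
    have key' : A lam (S y) - ((QZ y : Y) + (QR y : Y)) =
        μ⁻¹ • Rm (G1 y) + (μ • D (G2 y) + Rm (G2 y)) := by
      rw [h1, hAx (G1 y), hAx (G2 y), hTG1 y, hTG2 y, hDG1 y]
      rw [zero_add, smul_add, smul_smul, inv_mul_cancel₀ hμne, one_smul]
      abel
    rw [hQsum y] at key'
    exact key' 
  -- norm estimate
  set F : Y →L[ℝ] Y := (A lam).comp S with hFdef
  have hcoef : δ * C1 + (ε * C3 + δ * C2) ≤ 1 / 2 := by
    have h1 : δ * (C1 + C2) ≤ 1 / 4 := by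
      rw [hδdef]
      rw [div_mul_eq_mul_div, one_mul, div_le_div_iff₀ (by positivity) (by norm_num)]
      linarith
    have h2 : ε * C3 ≤ 1 / 4 := by
      have := mul_le_mul_of_nonneg_right hεC3 hC3nn
      have h3 : 1 / (4 * (C3 + 1)) * C3 ≤ 1 / 4 := by
        rw [div_mul_eq_mul_div, one_mul, div_le_div_iff₀ (by positivity) (by norm_num)]
        linarith
      linarith
    have h1' : δ * C1 + δ * C2 ≤ 1 / 4 := by rw [← mul_add]; exact h1
    linarith
  have hEnorm : ‖F - 1‖ ≤ 1 / 2 := by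
    apply ContinuousLinearMap.opNorm_le_bound _ (by norm_num)
    intro y
    have hFy : (F - 1) y = A lam (S y) - y := by
      simp [hFdef, ContinuousLinearMap.sub_apply]
    rw [hFy, key y]
    have b1 : ‖μ⁻¹ • Rm (G1 y)‖ ≤ δ * C1 * ‖y‖ := by
      rw [norm_smul, Real.norm_eq_abs, abs_inv]
      have hG1y : ‖Rm (G1 y)‖ ≤ δ * |μ| * (C1 * ‖y‖) := by
        calc ‖Rm (G1 y)‖ ≤ ‖Rm‖ * ‖G1 y‖ := Rm.le_opNorm _
          _ ≤ (δ * |μ|) * (C1 * ‖y‖) := by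
              apply mul_le_mul hRmle (G1.le_opNorm y) (norm_nonneg _)
              positivity
      calc |μ|⁻¹ * ‖Rm (G1 y)‖ ≤ |μ|⁻¹ * (δ * |μ| * (C1 * ‖y‖)) := by
            apply mul_le_mul_of_nonneg_left hG1y (by positivity)
        _ = δ * C1 * ‖y‖ := by field_simp
    have b2 : ‖μ • D (G2 y)‖ ≤ ε * C3 * ‖y‖ := by
      rw [norm_smul, Real.norm_eq_abs]
      have hDG2y : ‖D (G2 y)‖ ≤ C3 * ‖y‖ := by
        calc ‖D (G2 y)‖ ≤ ‖D‖ * ‖G2 y‖ := D.le_opNorm _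
          _ ≤ ‖D‖ * (C2 * ‖y‖) := by
              apply mul_le_mul_of_nonneg_left (G2.le_opNorm y) (norm_nonneg _)
          _ = C3 * ‖y‖ := by rw [hC3]; ring
      calc |μ| * ‖D (G2 y)‖ ≤ ε * (C3 * ‖y‖) :=
            mul_le_mul hμabs hDG2y (norm_nonneg _) (le_of_lt hεpos)
        _ = ε * C3 * ‖y‖ := by ring
    have b3 : ‖Rm (G2 y)‖ ≤ δ * C2 * ‖y‖ := by
      have h1 : ‖Rm (G2 y)‖ ≤ (δ * |μ|) * (C2 * ‖y‖) := by
        calc ‖Rm (G2 y)‖ ≤ ‖Rm‖ * ‖G2 y‖ := Rm.le_opNorm _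
          _ ≤ (δ * |μ|) * (C2 * ‖y‖) := by
              apply mul_le_mul hRmle (G2.le_opNorm y) (norm_nonneg _)
              positivity
      have hμ1 : |μ| ≤ 1 := le_trans hμabs hε1
      calc ‖Rm (G2 y)‖ ≤ δ * |μ| * (C2 * ‖y‖) := h1
        _ ≤ δ * 1 * (C2 * ‖y‖) := by
            apply mul_le_mul_of_nonneg_right _ (mul_nonneg hC2nn (norm_nonneg y))
            exact mul_le_mul_of_nonneg_left hμ1 hδpos.le
        _ = δ * C2 * ‖y‖ := by ring
    calc ‖μ⁻¹ • Rm (G1 y) + (μ • D (G2 y) + Rm (G2 y))‖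
        ≤ ‖μ⁻¹ • Rm (G1 y)‖ + (‖μ • D (G2 y)‖ + ‖Rm (G2 y)‖) :=
          le_trans (norm_add_le _ _) (by gcongr; exact norm_add_le _ _)
      _ ≤ δ * C1 * ‖y‖ + (ε * C3 * ‖y‖ + δ * C2 * ‖y‖) := by gcongr
      _ = (δ * C1 + (ε * C3 + δ * C2)) * ‖y‖ := by ring
      _ ≤ 1 / 2 * ‖y‖ := mul_le_mul_of_nonneg_right hcoef (norm_nonneg _)
  have hlt : ‖(1 : Y →L[ℝ] Y) - F‖ < 1 := by
    have : (1 : Y →L[ℝ] Y) - F = -(F - 1) := by abel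
    rw [this, norm_neg]
    linarith
  have hFunit : IsUnit F := by
    have h2 := (Units.oneSub (1 - F) hlt).isUnit
    rwa [Units.val_oneSub, sub_sub_cancel] at h2
  obtain ⟨u, huval⟩ := hFunit
  have hsurjA : Function.Surjective (A lam) := by
    intro y
    refine ⟨S (((u⁻¹ : (Y →L[ℝ] Y)ˣ) : Y →L[ℝ] Y) y), ?_⟩
    have h1 : ((u : Y →L[ℝ] Y) * ((u⁻¹ : (Y →L[ℝ] Y)ˣ) : Y →L[ℝ] Y)) y
        = (1 : Y →L[ℝ] Y) y := by rw [u.mul_inv]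
    rw [ContinuousLinearMap.mul_apply, ContinuousLinearMap.one_apply, huval, hFdef,
      ContinuousLinearMap.comp_apply] at h1
    exact h1
  -- injectivity from Fredholm index zero
  obtain ⟨-, hkerfd2, hrk2⟩ := hFred lam ⟨by linarith [hmem.1], by linarith [hmem.2]⟩
  haveI := hkerfd2
  have hrange : LinearMap.range ((A lam : X →L[ℝ] Y) : X →ₗ[ℝ] Y) = ⊤ :=
    LinearMap.range_eq_top.mpr hsurjA
  have hsub2 : Subsingleton (Y ⧸ LinearMap.range ((A lam : X →L[ℝ] Y) : X →ₗ[ℝ] Y)) := by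
    rw [hrange]
    exact Submodule.Quotient.subsingleton_iff.mpr rfl
  have h0 : Module.finrank ℝ (LinearMap.ker ((A lam : X →L[ℝ] Y) : X →ₗ[ℝ] Y)) = 0 := by
    rw [hrk2]
    exact Module.finrank_zero_of_subsingleton
  have hker : LinearMap.ker ((A lam : X →L[ℝ] Y) : X →ₗ[ℝ] Y) = ⊥ :=
    Submodule.finrank_eq_zero.mp h0
  exact ⟨LinearMap.ker_eq_bot.mp hker, hsurjA⟩
end
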